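/- Let (X, 𝓑) be a simple (2^n − 1, 2^(n−1), 2^(n−2))-BIBD (with n ≥ 2) whose number of blocks equals its number of points and whose incidence matrix has rank exactly n over 𝔽₂. Then (X, 𝓑) is isomorphic to the complementary design of PG(n − 1, 2): there exists a bijection f from X to the set of nonzero vectors of (ZMod 2)^n such that for every subset B of X, B is a block of 𝓑 if and only if the image f(B) equals {x ∈ (ZMod 2)^n : ∑ᵢ aᵢxᵢ = 1} for some nonzero a ∈ (ZMod 2)^n. -/

import Mathlib

lemma zmod2_eq_one_of_ne_zero {c : ZMod 2} (h : c ≠ 0) : c = 1 := by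
  revert h; revert c; decide

lemma card_one_fiber {V : Type*} [AddCommGroup V] [Module (ZMod 2) V] [Fintype V]
    [DecidableEq V] (φ : V →ₗ[ZMod 2] ZMod 2) (hφ : φ ≠ 0) :
    2 * Fintype.card {w : V // φ w = 1} = Fintype.card V := by
  classical
  obtain ⟨w₀, hw₀⟩ : ∃ w, φ w = 1 := by
    by_contra h
    push_neg at h
    apply hφ
    ext w
    by_contra hz
    exact h w (zmod2_eq_one_of_ne_zero hz)
  have hww : w₀ + w₀ = 0 := by
    have : (2 : ZMod 2) • w₀ = w₀ + w₀ := two_smul _ _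
    rw [show (2 : ZMod 2) = 0 by decide, zero_smul] at this
    exact this.symm
  have e : {w : V // φ w = 0} ≃ {w : V // φ w = 1} := by
    refine ⟨fun w => ⟨w.1 + w₀, by simp [map_add, w.2, hw₀]⟩,
           fun w => ⟨w.1 + w₀, by simp [map_add, w.2, hw₀]; decide⟩, ?_, ?_⟩ <;>
      · intro w; ext; simp [add_assoc, hww]
  have h0 : Fintype.card {w : V // φ w = 0} = Fintype.card {w : V // φ w = 1} :=
    Fintype.card_congr e
  have hcompl : Fintype.card {w : V // ¬ (φ w = 1)} = Fintype.card V - Fintype.card {w : V // φ w = 1} :=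
    Fintype.card_subtype_compl _
  have hiff : ∀ w : V, ¬ (φ w = 1) ↔ φ w = 0 := by
    intro w
    constructor
    · intro h
      by_contra hz
      exact h (zmod2_eq_one_of_ne_zero hz)
    · intro h h1
      rw [h] at h1
      exact absurd h1 (by decide)
  have h01 : Fintype.card {w : V // ¬ (φ w = 1)} = Fintype.card {w : V // φ w = 0} :=
    Fintype.card_congr (Equiv.subtypeEquivRight hiff)
  have hle : Fintype.card {w : V // φ w = 1} ≤ Fintype.card V := Fintype.card_subtype_le _
  omega

/-- `(X, 𝓑)` is a simple `(v, k, λ)`-BIBD: `X` has `v` points, every block has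
exactly `k` points, every pair of distinct points lies in exactly `λ` blocks,
and `v > k ≥ 2`. -/
def IsBIBD (X : Type*) [Fintype X] [DecidableEq X]
    (𝓑 : Finset (Finset X)) (v k l : ℕ) : Prop :=
  Fintype.card X = v ∧
  (∀ B ∈ 𝓑, B.card = k) ∧
  (∀ x y : X, x ≠ y → (𝓑.filter fun B => x ∈ B ∧ y ∈ B).card = l) ∧
  k < v ∧ 2 ≤ k

/-- The incidence matrix of the design `(X, 𝓑)` over `𝔽₂ = ZMod 2`:
rows are indexed by points, columns by blocks, with entry `1` iff
the point belongs to the block. -/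
def incidenceMatrix (X : Type*) [DecidableEq X]
    (𝓑 : Finset (Finset X)) : Matrix X {B // B ∈ 𝓑} (ZMod 2) :=
  fun x B => if x ∈ B.1 then 1 else 0

/-- The block `B_a = {x : (ZMod 2)^n | ∑ i, a i * x i = 1}` of the
complementary design of `PG(n - 1, 2)`. -/
def PGCompBlock (n : ℕ) (a : Fin n → ZMod 2) : Set (Fin n → ZMod 2) :=
  {x | ∑ i, a i * x i = 1}

theorem stmt_9 {X : Type*} [Fintype X] [DecidableEq X]
    (𝓑 : Finset (Finset X)) (n : ℕ) (hn : 2 ≤ n)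
    (hBIBD : IsBIBD X 𝓑 (2 ^ n - 1) (2 ^ (n - 1)) (2 ^ (n - 2)))
    (hsymm : 𝓑.card = Fintype.card X)
    (hrank : (incidenceMatrix X 𝓑).rank = n) :
    ∃ f : X ≃ {x : Fin n → ZMod 2 // x ≠ 0},
      ∀ B : Finset X, B ∈ 𝓑 ↔
        ∃ a : Fin n → ZMod 2, a ≠ 0 ∧
          (fun p : X => (f p : Fin n → ZMod 2)) '' ↑B = PGCompBlock n a := by
  classical
  obtain ⟨hcard, hblk, hlam, hkv, hk2⟩ := hBIBD
  obtain ⟨m, rfl⟩ : ∃ m, n = m + 2 := ⟨n - 2, by omega⟩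
  have hblk' : ∀ B ∈ 𝓑, B.card = 2 ^ (m + 1) := hblk
  have hlam' : ∀ x y : X, x ≠ y →
      (𝓑.filter fun B => x ∈ B ∧ y ∈ B).card = 2 ^ m := hlam
  clear hblk hlam hn hkv hk2
  set M : Matrix X {B // B ∈ 𝓑} (ZMod 2) := incidenceMatrix X 𝓑 with hM
  set W : Submodule (ZMod 2) (X → ZMod 2) := LinearMap.range M.mulVecLin with hWdef
  have hrankW : Module.finrank (ZMod 2) W = m + 2 := hrank
  -- the basis
  let bW : Module.Basis (Fin (m + 2)) (ZMod 2) W :=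
    Module.finBasisOfFinrankEq (ZMod 2) W hrankW
  -- indicator vectors
  let ind : Finset X → (X → ZMod 2) := fun B x => if x ∈ B then 1 else 0
  have hmem_iff : ∀ (B : Finset X) (x : X), x ∈ B ↔ ind B x = 1 := by
    intro B x
    by_cases h : x ∈ B <;> simp [ind, h]
  have hindW : ∀ B ∈ 𝓑, ind B ∈ W := by
    intro B hB
    refine ⟨Pi.single ⟨B, hB⟩ 1, ?_⟩
    ext x
    simp [Matrix.mulVecLin, M, incidenceMatrix, ind]
  have hind_inj : Function.Injective ind := by
    intro B B' h
    ext x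
    rw [hmem_iff, hmem_iff, h]
  have hind_ne : ∀ B ∈ 𝓑, ind B ≠ 0 := by
    intro B hB h0
    have hBne : B.Nonempty := by
      rw [← Finset.card_pos, hblk' B hB]
      positivity
    obtain ⟨x, hx⟩ := hBne
    have := (hmem_iff B x).1 hx
    rw [h0] at this
    simp at this
  -- cardinalities
  have hcardW : Fintype.card W = 2 ^ (m + 2) := by
    rw [Fintype.card_congr bW.equivFun.toEquiv]
    simp [ZMod.card]
  have hcardW' : Fintype.card {w : W // w ≠ 0} = 2 ^ (m + 2) - 1 := by
    have h1 : Fintype.card {w : W // ¬ (w = 0)} =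
        Fintype.card W - Fintype.card {w : W // w = 0} :=
      Fintype.card_subtype_compl _
    rw [h1, Fintype.card_subtype_eq, hcardW]
  have hcardB : Fintype.card {B // B ∈ 𝓑} = 2 ^ (m + 2) - 1 := by
    rw [Fintype.card_coe, hsymm, hcard]
  -- the bijection between blocks and nonzero vectors of W
  let G : {B // B ∈ 𝓑} → {w : W // w ≠ 0} := fun B =>
    ⟨⟨ind B.1, hindW B.1 B.2⟩, fun h => hind_ne B.1 B.2 (congrArg Subtype.val h)⟩
  have hG_inj : Function.Injective G := by
    intro B B' h
    have : ind B.1 = ind B'.1 := congrArg (fun w => w.1.1) h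
    exact Subtype.ext (hind_inj this)
  have hG_bij : Function.Bijective G :=
    (Fintype.bijective_iff_injective_and_card G).2 ⟨hG_inj, by rw [hcardB, hcardW']⟩
  have hsurjW : ∀ w : W, w ≠ 0 → ∃ B ∈ 𝓑, ind B = (w : X → ZMod 2) := by
    intro w hw
    obtain ⟨B, hB⟩ := hG_bij.2 ⟨w, hw⟩
    exact ⟨B.1, B.2, congrArg (fun u => u.1.1) hB⟩
  -- counting transfer
  have count : ∀ (q : (X → ZMod 2) → Prop) (_ : DecidablePred q), ¬ q 0 →
      (𝓑.filter fun B => q (ind B)).card =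
        (Finset.univ.filter fun w : W => q w.1).card := by
    intro q _ hq0
    refine Finset.card_bij (fun B hB => (⟨ind B, hindW B (Finset.mem_filter.1 hB).1⟩ : W))
      ?_ ?_ ?_
    · intro B hB
      simp only [Finset.mem_filter, Finset.mem_univ, true_and]
      exact (Finset.mem_filter.1 hB).2
    · intro B hB B' hB' h
      exact hind_inj (congrArg Subtype.val h)
    · intro w hw
      have hqw : q w.1 := (Finset.mem_filter.1 hw).2
      have hwne : w ≠ 0 := by
        intro h; rw [h] at hqw; exact hq0 hqw
      obtain ⟨B, hB, hiB⟩ := hsurjW w hwne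
      refine ⟨B, Finset.mem_filter.2 ⟨hB, by rw [hiB]; exact hqw⟩, ?_⟩
      exact Subtype.ext hiB
  -- evaluation functionals
  let ev : X → (W →ₗ[ZMod 2] ZMod 2) := fun x => (LinearMap.proj x).comp W.subtype
  have hev : ∀ (x : X) (w : W), ev x w = (w : X → ZMod 2) x := fun _ _ => rfl
  have countx : ∀ x : X, ev x ≠ 0 →
      (𝓑.filter fun B => x ∈ B).card = 2 ^ (m + 1) := by
    intro x hx
    have h1 : (𝓑.filter fun B => x ∈ B) = 𝓑.filter fun B => (ind B) x = 1 := by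
      apply Finset.filter_congr
      intro B _
      exact hmem_iff B x
    have h2 := count (fun w => w x = 1) (by infer_instance) (by simp)
    rw [h1, h2]
    have h3 := card_one_fiber (ev x) hx
    rw [hcardW] at h3
    have h4 : Fintype.card {w : W // (w : X → ZMod 2) x = 1} =
        (Finset.univ.filter fun w : W => (w : X → ZMod 2) x = 1).card :=
      Fintype.card_subtype _
    have h5 : Fintype.card {w : W // ev x w = 1} =
        Fintype.card {w : W // (w : X → ZMod 2) x = 1} :=
      Fintype.card_congr (Equiv.subtypeEquivRight (fun w => by rw [hev]))
    rw [← h4, ← h5]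
    have hp : (2:ℕ) ^ (m + 2) = 2 * 2 ^ (m + 1) := by ring
    clear h1 h2 h4 h5
    omega
  -- coordinates of points
  let fval : X → (Fin (m + 2) → ZMod 2) := fun p i => (bW i : X → ZMod 2) p
  have ev_sum : ∀ (p : X) (c : Fin (m + 2) → ZMod 2),
      ((∑ i, c i • bW i : W) : X → ZMod 2) p = ∑ i, c i * fval p i := by
    intro p c
    have h := map_sum (ev p) (fun i => c i • bW i) Finset.univ
    simp only [map_smul, smul_eq_mul] at h
    exact h
  have hrepr : ∀ (w : W) (p : X),
      (w : X → ZMod 2) p = ∑ i, bW.repr w i * fval p i := by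
    intro w p
    conv_lhs => rw [← bW.sum_repr w]
    exact ev_sum p _
  -- every point is in some block
  have hx_block : ∀ x : X, ∃ B ∈ 𝓑, x ∈ B := by
    intro x
    have h4 : (4:ℕ) ≤ 2 ^ (m + 2) := by
      calc (4:ℕ) = 2 ^ 2 := by norm_num
      _ ≤ 2 ^ (m + 2) := Nat.pow_le_pow_right (by norm_num) (by omega)
    have h1 : 1 < Fintype.card X := by omega
    obtain ⟨y, hy⟩ := Fintype.exists_ne_of_one_lt_card h1 x
    have h2 := hlam' y x hy
    have h3 : (𝓑.filter fun B => y ∈ B ∧ x ∈ B).Nonempty := by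
      rw [← Finset.card_pos, h2]
      positivity
    obtain ⟨B, hB⟩ := h3
    obtain ⟨hB1, _, hB3⟩ := Finset.mem_filter.1 hB
    exact ⟨B, hB1, hB3⟩
  have hev_ne : ∀ x : X, ev x ≠ 0 := by
    intro x h
    obtain ⟨B, hB, hxB⟩ := hx_block x
    have h1 : ev x ⟨ind B, hindW B hB⟩ = 0 := by rw [h]; rfl
    rw [hev] at h1
    have h2 := (hmem_iff B x).1 hxB
    change ind B x = 0 at h1
    rw [h2] at h1
    exact absurd h1 (by decide)
  have hfval_ne : ∀ x : X, fval x ≠ 0 := by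
    intro x h
    apply hev_ne x
    apply bW.ext
    intro i
    have : fval x i = 0 := by rw [h]; rfl
    exact this
  have hfval_inj : Function.Injective fval := by
    intro x y hxy
    by_contra hne
    have hevxy : ev x = ev y := by
      apply bW.ext
      intro i
      exact congrFun hxy i
    have hfiltereq : (𝓑.filter fun B => x ∈ B ∧ y ∈ B) = 𝓑.filter fun B => x ∈ B := by
      apply Finset.filter_congr
      intro B hB
      have hxyB : ind B x = ind B y := by
        have h := LinearMap.congr_fun hevxy ⟨ind B, hindW B hB⟩
        rw [hev, hev] at h
        exact h
      constructor
      · exact fun h => h.1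
      · intro h
        refine ⟨h, ?_⟩
        rw [hmem_iff, ← hxyB, ← hmem_iff]
        exact h
    have hl := hlam' x y hne
    rw [hfiltereq, countx x (hev_ne x)] at hl
    have hp : (2:ℕ) ^ (m + 1) = 2 * 2 ^ m := by ring
    have hpos : (0:ℕ) < 2 ^ m := by positivity
    omega
  -- the bijection
  let F : X → {v : Fin (m + 2) → ZMod 2 // v ≠ 0} := fun x => ⟨fval x, hfval_ne x⟩
  have hF_inj : Function.Injective F := fun x y h =>
    hfval_inj (congrArg Subtype.val h)
  have hcardV : Fintype.card {v : Fin (m + 2) → ZMod 2 // v ≠ 0} = 2 ^ (m + 2) - 1 := by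
    have h1 : Fintype.card {v : Fin (m + 2) → ZMod 2 // ¬ (v = 0)} =
        Fintype.card (Fin (m + 2) → ZMod 2) -
          Fintype.card {v : Fin (m + 2) → ZMod 2 // v = 0} :=
      Fintype.card_subtype_compl _
    rw [h1, Fintype.card_subtype_eq]
    simp [ZMod.card]
  have hF_bij : Function.Bijective F :=
    (Fintype.bijective_iff_injective_and_card F).2 ⟨hF_inj, by rw [hcard, hcardV]⟩
  refine ⟨Equiv.ofBijective F hF_bij, ?_⟩
  have hf_app : ∀ p : X, ((Equiv.ofBijective F hF_bij) p : Fin (m + 2) → ZMod 2) = fval p :=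
    fun p => rfl
  -- the common image lemma
  have key : ∀ (B : Finset X) (a : Fin (m + 2) → ZMod 2),
      (∀ p : X, ind B p = ∑ i, a i * fval p i) →
      (fun p : X => ((Equiv.ofBijective F hF_bij) p : Fin (m + 2) → ZMod 2)) '' ↑B =
        PGCompBlock (m + 2) a := by
    intro B a hpt
    ext v
    constructor
    · rintro ⟨p, hpB, rfl⟩
      have hp1 : ind B p = 1 := (hmem_iff B p).1 (Finset.mem_coe.1 hpB)
      show ∑ i, a i * fval p i = 1
      rw [← hpt p, hp1]
    · intro hv
      have hv1 : ∑ i, a i * v i = 1 := hv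
      have hvne : v ≠ 0 := by
        intro h
        rw [h] at hv1
        simp at hv1
      obtain ⟨p, hp⟩ := hF_bij.2 ⟨v, hvne⟩
      have hfp : fval p = v := congrArg Subtype.val hp
      refine ⟨p, ?_, congrArg Subtype.val hp⟩
      apply Finset.mem_coe.2
      rw [hmem_iff B p, hpt p, hfp]
      exact hv1
  intro B
  constructor
  · intro hB
    set w : W := ⟨ind B, hindW B hB⟩ with hw
    refine ⟨fun i => bW.repr w i, ?_, ?_⟩
    · intro h
      apply hind_ne B hB
      funext p
      have h1 := hrepr w p
      have h2 : ∀ i, bW.repr w i = 0 := fun i => congrFun h i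
      simp only [h2, zero_mul, Finset.sum_const_zero] at h1
      exact h1
    · apply key
      intro p
      exact hrepr w p
  · rintro ⟨a, ha, himg⟩
    set w : W := ∑ i, a i • bW i with hw
    have hwne : w ≠ 0 := by
      intro h
      apply ha
      have := bW.repr_sum_self a
      rw [← hw, h] at this
      rw [← this]
      simp
    obtain ⟨B', hB', hindB'⟩ := hsurjW w hwne
    have himg' : (fun p : X => ((Equiv.ofBijective F hF_bij) p : Fin (m + 2) → ZMod 2)) '' ↑B' =
        PGCompBlock (m + 2) a := by
      apply key
      intro p
      rw [hindB']
      exact ev_sum p a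
    have hBB' : (↑B : Set X) = ↑B' := by
      have h1 : (fun p : X => ((Equiv.ofBijective F hF_bij) p : Fin (m + 2) → ZMod 2)) '' ↑B =
          (fun p : X => ((Equiv.ofBijective F hF_bij) p : Fin (m + 2) → ZMod 2)) '' ↑B' :=
        himg.trans himg'.symm
      have hinj2 : Function.Injective
          (fun p : X => ((Equiv.ofBijective F hF_bij) p : Fin (m + 2) → ZMod 2)) := by
        intro p q h
        exact (Equiv.ofBijective F hF_bij).injective (Subtype.ext h)
      exact Set.image_injective.2 hinj2 h1
    rw [Finset.coe_injective hBB']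
    exact hB'
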